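/- If a preordered space has a countable thermodynamic representation (g_n)_{n≥0} ∪ {s}, then it has a thermodynamic representation consisting of exactly two functions {g', s}. -/
import Mathlib


lemma exists_embedding_pi_real : Nonempty ((ℕ → ℝ) ↪ ℝ) := by
  rw [← Cardinal.le_def]
  have h : Cardinal.mk (ℕ → ℝ) = Cardinal.mk ℝ := by
    simp only [Cardinal.mk_arrow, Cardinal.mk_real, Cardinal.mk_nat, Cardinal.lift_id]
    exact Cardinal.continuum_power_aleph0
  exact h.le

/-- A countable thermodynamic representation can be reduced to a thermodynamic
representation consisting of exactly two functions. -/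
theorem countable_thermo_representation_reduces_to_two {X : Type*} (le : X → X → Prop)
    (hrefl : ∀ x, le x x) (htrans : ∀ x y z, le x y → le y z → le x z)
    (g : ℕ → X → ℝ) (s : X → ℝ)
    (hrep : ∀ x y, le x y ↔ (∀ n, g n x = g n y) ∧ s x ≤ s y) :
    ∃ g' : X → ℝ, ∀ x y, le x y ↔ (g' x = g' y ∧ s x ≤ s y) := by
  obtain ⟨f⟩ := exists_embedding_pi_real
  refine ⟨fun x => f (fun n => g n x), fun x y => ?_⟩
  rw [hrep]
  constructor
  · rintro ⟨h1, h2⟩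
    exact ⟨congrArg f (funext h1), h2⟩
  · rintro ⟨h1, h2⟩
    exact ⟨fun n => congrFun (f.injective h1) n, h2⟩
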